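/- For any outcomes x ∈ {0,1}^T and predictions p ∈ [0,1]^T, the calibration distance CalDist(x,p) = min over q in C(x) of ‖p−q‖₁ is at most the expected calibration error ECE(x,p) = Σ_{α} |Σ_{t=1}^T (x_t − p_t)·1[p_t = α]|. -/

import Mathlib

/-- The calibration distance is at most the ECE. -/
theorem calDist_le_ECE (T : ℕ) (x p : Fin T → ℝ)
    (hx : ∀ t, x t = 0 ∨ x t = 1) (hp : ∀ t, p t ∈ Set.Icc (0:ℝ) 1) :
    sInf {d : ℝ | ∃ q : Fin T → ℝ, (∀ t, q t ∈ Set.Icc (0:ℝ) 1) ∧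
        (∀ α : ℝ, ∑ t, (x t - q t) * (if q t = α then 1 else 0) = 0) ∧
        d = ∑ t, |p t - q t|} ≤
      ∑ α ∈ Finset.image p Finset.univ,
        |∑ t, (x t - p t) * (if p t = α then 1 else 0)| := by
  classical
  set F : ℝ → Finset (Fin T) := fun β => Finset.univ.filter (fun s => p s = β) with hF
  set avg : ℝ → ℝ := fun β => (∑ s ∈ F β, x s) / (F β).card with havg
  set q : Fin T → ℝ := fun t => avg (p t) with hq
  have hmemF : ∀ t, t ∈ F (p t) := by intro t; simp [hF]
  have hcardpos : ∀ t, 0 < (F (p t)).card := fun t => Finset.card_pos.2 ⟨t, hmemF t⟩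
  have hqconst : ∀ β, ∀ s ∈ F β, q s = avg β := by
    intro β s hs
    have : p s = β := by simpa [hF] using hs
    simp [hq, this]
  have hpconst : ∀ β, ∀ s ∈ F β, p s = β := by
    intro β s hs; simpa [hF] using hs
  -- fiber sum of x equals card * avg, when fiber nonempty
  have hfiber : ∀ β, (F β).Nonempty → ∑ s ∈ F β, (x s - avg β) = 0 := by
    intro β hne
    have hc : ((F β).card : ℝ) ≠ 0 := by
      exact_mod_cast (Finset.card_pos.2 hne).ne'
    rw [Finset.sum_sub_distrib, Finset.sum_const, nsmul_eq_mul, havg]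
    field_simp
    ring
  have hq01 : ∀ t, q t ∈ Set.Icc (0:ℝ) 1 := by
    intro t
    have h1 : (0:ℝ) ≤ ∑ s ∈ F (p t), x s :=
      Finset.sum_nonneg (fun s _ => by rcases hx s with h | h <;> simp [h])
    have h2 : ∑ s ∈ F (p t), x s ≤ ((F (p t)).card : ℝ) := by
      calc ∑ s ∈ F (p t), x s ≤ ∑ s ∈ F (p t), 1 :=
            Finset.sum_le_sum (fun s _ => by rcases hx s with h | h <;> simp [h])
        _ = ((F (p t)).card : ℝ) := by simp
    constructor
    · exact div_nonneg h1 (Nat.cast_nonneg _)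
    · rw [hq]
      simp only [havg]
      rw [div_le_one (by exact_mod_cast hcardpos t)]
      exact h2
  have hcal : ∀ α : ℝ, ∑ t, (x t - q t) * (if q t = α then 1 else 0) = 0 := by
    intro α
    rw [← Finset.sum_fiberwise_of_maps_to (g := p)
        (fun t _ => Finset.mem_image_of_mem p (Finset.mem_univ t))
        (fun t => (x t - q t) * (if q t = α then 1 else 0))]
    apply Finset.sum_eq_zero
    intro β hβ
    have hne : (F β).Nonempty := by
      obtain ⟨t, _, ht⟩ := Finset.mem_image.mp hβ
      exact ⟨t, by simp [hF, ht]⟩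
    have : ∀ s ∈ F β, (x s - q s) * (if q s = α then 1 else 0)
        = (x s - avg β) * (if avg β = α then 1 else 0) := by
      intro s hs; rw [hqconst β s hs]
    rw [Finset.sum_congr rfl this, ← Finset.sum_mul, hfiber β hne, zero_mul]
  have hdist : ∑ t, |p t - q t| =
      ∑ α ∈ Finset.image p Finset.univ, |∑ t, (x t - p t) * (if p t = α then 1 else 0)| := by
    rw [← Finset.sum_fiberwise_of_maps_to (g := p)
        (fun t _ => Finset.mem_image_of_mem p (Finset.mem_univ t))
        (fun t => |p t - q t|)]
    apply Finset.sum_congr rfl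
    intro β hβ
    have hne : (F β).Nonempty := by
      obtain ⟨t, _, ht⟩ := Finset.mem_image.mp hβ
      exact ⟨t, by simp [hF, ht]⟩
    have h1 : ∑ s ∈ F β, |p s - q s| = (F β).card * |β - avg β| := by
      rw [Finset.sum_congr rfl (fun s hs => by rw [hqconst β s hs, hpconst β s hs]),
        Finset.sum_const, nsmul_eq_mul]
    have h2 : ∑ t, (x t - p t) * (if p t = β then 1 else 0) = ∑ s ∈ F β, (x s - p s) := by
      rw [hF]
      rw [Finset.sum_filter]
      apply Finset.sum_congr rfl
      intro t _
      split_ifs <;> simp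
    have hS : ((F β).card : ℝ) * avg β = ∑ s ∈ F β, x s := by
      have := hfiber β hne
      rw [Finset.sum_sub_distrib, Finset.sum_const, nsmul_eq_mul, sub_eq_zero] at this
      exact this.symm
    have h3 : ∑ s ∈ F β, (x s - p s) = (∑ s ∈ F β, x s) - (F β).card * β := by
      rw [Finset.sum_sub_distrib]
      congr 1
      rw [Finset.sum_congr rfl (hpconst β), Finset.sum_const, nsmul_eq_mul]
    rw [h1, h2, h3, ← hS, ← mul_sub, abs_mul, Nat.abs_cast, abs_sub_comm]
  have hmem : (∑ t, |p t - q t|) ∈ {d : ℝ | ∃ q : Fin T → ℝ, (∀ t, q t ∈ Set.Icc (0:ℝ) 1) ∧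
        (∀ α : ℝ, ∑ t, (x t - q t) * (if q t = α then 1 else 0) = 0) ∧
        d = ∑ t, |p t - q t|} := ⟨q, hq01, hcal, rfl⟩
  have hbdd : BddBelow {d : ℝ | ∃ q : Fin T → ℝ, (∀ t, q t ∈ Set.Icc (0:ℝ) 1) ∧
        (∀ α : ℝ, ∑ t, (x t - q t) * (if q t = α then 1 else 0) = 0) ∧
        d = ∑ t, |p t - q t|} := by
      refine ⟨0, fun d hd => ?_⟩
      obtain ⟨r, _, _, rfl⟩ := hd
      exact Finset.sum_nonneg (fun t _ => abs_nonneg _)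
  calc sInf _ ≤ ∑ t, |p t - q t| := csInf_le hbdd hmem
    _ = _ := hdist
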